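/- Let ℓ be a prime number and A a commutative ring in which ℓ is invertible. A family (q_n)_{n ≥ 0} ∈ ∏_{n ≥ 0} A[z^{±1}]/(Φ_{ℓⁿ}) lies in the image of the homomorphism c if and only if there exist an integer N ≥ 0 and elements P_i ∈ D_i for 0 ≤ i ≤ N such that for every n ≥ 0 one has q_n = class of (P_0 + P_1 + ⋯ + P_N) modulo Φ_{ℓⁿ}; in that case (q_n)_{n≥0} = c(P_0 + ⋯ + P_N). Equivalently, defining P_i ∈ D_i inductively as the unique element of D_i whose class modulo Φ_{ℓⁱ} equals that of q_i − (P_0 + ⋯ + P_{i−1}), the family (q_n) lies in the image of c if and only if there exists N such that q_n equals the class of P_0 + ⋯ + P_N modulo Φ_{ℓⁿ} for all n ≥ N. -/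

import Mathlib

open LaurentPolynomial

/-- The `A`-submodule `A(i;j)` of the Laurent polynomial ring `A[z^{±1}]` consisting of
Laurent polynomials `∑_{i ≤ s ≤ j} a_s z^s`, realized as the span of the monomials `T s`
for `i ≤ s ≤ j`.  Here we take `i = -⌊φ(ℓ^n)/2⌋` and `j = φ(ℓ^n) - ⌊φ(ℓ^n)/2⌋ - 1`. -/
noncomputable def cyclotomicBox (A : Type*) [CommRing A] (ℓ n : ℕ) :
    Submodule A (LaurentPolynomial A) :=
  Submodule.span A ((fun s : ℤ => (T s : LaurentPolynomial A)) ''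
    Set.Icc (-(((ℓ ^ n).totient / 2 : ℕ) : ℤ))
      (((ℓ ^ n).totient : ℤ) - (((ℓ ^ n).totient / 2 : ℕ) : ℤ) - 1))

/-- The factors of the cyclotomic expansion: `1` for `i = 0` and `z^{ℓ^{i-1}} - 1` for `i ≥ 1`. -/
noncomputable def cyclotomicFactor (A : Type*) [CommRing A] (ℓ : ℕ) :
    ℕ → LaurentPolynomial A
  | 0 => 1
  | (n + 1) => T ((ℓ ^ n : ℕ) : ℤ) - 1

/-- The submodule `D_n` of `A[z^{±1}]`:  `D_0 = A(0;0)` is the module of constants, and for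
`n ≥ 1`, `D_n = A(-⌊φ(ℓ^n)/2⌋ ; φ(ℓ^n) - ⌊φ(ℓ^n)/2⌋ - 1) · (z^{ℓ^{n-1}} - 1)`. -/
noncomputable def cyclotomicD (A : Type*) [CommRing A] (ℓ n : ℕ) :
    Submodule A (LaurentPolynomial A) :=
  Submodule.map (LinearMap.mulRight A (cyclotomicFactor A ℓ n)) (cyclotomicBox A ℓ n)

namespace CycAux

def mm (ℓ n : ℕ) : ℕ := (ℓ ^ n).totient
def hf (ℓ n : ℕ) : ℕ := mm ℓ n / 2
def ee (ℓ : ℕ) : ℕ → ℕ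
  | 0 => 0
  | n + 1 => ℓ ^ n
def lo (ℓ n : ℕ) : ℤ := -(hf ℓ n : ℤ)
def hiB (ℓ n : ℕ) : ℤ := (mm ℓ n : ℤ) - (hf ℓ n : ℤ) - 1
def hiJ (ℓ n : ℕ) : ℤ := hiB ℓ n + (ee ℓ n : ℤ)

variable {A : Type*} [CommRing A] {ℓ : ℕ}

lemma boxMem (n : ℕ) {s : ℤ} (h1 : lo ℓ n ≤ s) (h2 : s ≤ hiB ℓ n) :
    (T s : LaurentPolynomial A) ∈ cyclotomicBox A ℓ n :=
  Submodule.subset_span ⟨s, Set.mem_Icc.2 ⟨h1, h2⟩, rfl⟩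

lemma factorMulMem (n : ℕ) {x : LaurentPolynomial A} (hx : x ∈ cyclotomicBox A ℓ n) :
    x * cyclotomicFactor A ℓ n ∈ cyclotomicD A ℓ n :=
  ⟨x, hx, rfl⟩

lemma diff_mem (n : ℕ) {s : ℤ} (h1 : lo ℓ (n + 1) ≤ s) (h2 : s ≤ hiB ℓ (n + 1)) :
    (T (s + ((ℓ ^ n : ℕ) : ℤ)) - T s : LaurentPolynomial A) ∈ cyclotomicD A ℓ (n + 1) := by
  have h := factorMulMem (A := A) (n + 1) (boxMem (n + 1) h1 h2)
  have he : (T s : LaurentPolynomial A) * cyclotomicFactor A ℓ (n + 1)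
      = T (s + ((ℓ ^ n : ℕ) : ℤ)) - T s := by
    simp only [cyclotomicFactor, mul_sub, mul_one]
    rw [← T_add]
  rwa [he] at h

lemma mm_pos (hℓ : Nat.Prime ℓ) (n : ℕ) : 0 < mm ℓ n :=
  Nat.totient_pos.mpr (pow_pos hℓ.pos n)

lemma mm_add_ee (hℓ : Nat.Prime ℓ) (n : ℕ) : mm ℓ n + ee ℓ n = ℓ ^ n := by
  cases n with
  | zero => simp [mm, ee]
  | succ n =>
    have h := Nat.totient_prime_pow hℓ (n := n + 1) n.succ_pos
    have h2 : 1 ≤ ℓ := hℓ.one_lt.le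
    simp only [mm, ee, h, Nat.add_sub_cancel]
    rw [← Nat.mul_succ, Nat.succ_eq_add_one, Nat.sub_add_cancel h2, ← pow_succ]

lemma mm_mono (hℓ : Nat.Prime ℓ) (n : ℕ) : mm ℓ n ≤ mm ℓ (n + 1) := by
  have h1 := mm_add_ee hℓ n
  have h2 := mm_add_ee hℓ (n + 1)
  have h3 : ℓ ^ n + ℓ ^ n ≤ ℓ ^ (n + 1) := by
    have h := Nat.mul_le_mul hℓ.two_le (le_refl (ℓ ^ n))
    rw [pow_succ, mul_comm]; omega
  have h4 : ee ℓ (n + 1) = ℓ ^ n := rfl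
  have h5 : ee ℓ n ≤ ℓ ^ n := by cases n with
    | zero => simp [ee]
    | succ k => exact (Nat.pow_le_pow_right hℓ.pos (by omega))
  omega

lemma hf_mono (hℓ : Nat.Prime ℓ) (n : ℕ) : hf ℓ n ≤ hf ℓ (n + 1) :=
  Nat.div_le_div_right (mm_mono hℓ n)

lemma hf_lt_mm (hℓ : Nat.Prime ℓ) (n : ℕ) : hf ℓ n < mm ℓ n :=
  Nat.div_lt_self (mm_pos hℓ n) one_lt_two

lemma hiB_nonneg (hℓ : Nat.Prime ℓ) (n : ℕ) : 0 ≤ hiB ℓ n := by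
  have := hf_lt_mm hℓ n
  simp only [hiB]
  omega

lemma hiJ_eq (hℓ : Nat.Prime ℓ) (n : ℕ) : hiJ ℓ n = lo ℓ n + ((ℓ ^ n : ℕ) : ℤ) - 1 := by
  have h := mm_add_ee hℓ n
  have h' : (mm ℓ n : ℤ) + (ee ℓ n : ℤ) = ((ℓ ^ n : ℕ) : ℤ) := by exact_mod_cast congrArg (Nat.cast : ℕ → ℤ) h
  simp only [hiJ, hiB, lo]
  omega

lemma J_mem (hℓ : Nat.Prime ℓ) :
    ∀ n, ∀ t : ℤ, lo ℓ n ≤ t → t ≤ hiJ ℓ n →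
      (T t : LaurentPolynomial A) ∈ ⨆ k, cyclotomicD A ℓ k := by
  intro n
  induction n with
  | zero =>
    intro t h1 h2
    have hm : mm ℓ 0 = 1 := by simp [mm]
    have hlo : lo ℓ 0 = 0 := by simp [lo, hf, hm]
    have hhi : hiJ ℓ 0 = 0 := by simp [hiJ, hiB, hf, ee, hm]
    have ht : t = 0 := by omega
    subst ht
    have hb : (T (0 : ℤ) : LaurentPolynomial A) ∈ cyclotomicBox A ℓ 0 :=
      boxMem 0 (by omega) (by rw [hhi] at h2; simp [hiB, hf, hm])
    have hd := factorMulMem (A := A) 0 hb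
    rw [show cyclotomicFactor A ℓ 0 = 1 from rfl, mul_one] at hd
    exact le_iSup (cyclotomicD A ℓ) 0 hd
  | succ n IH =>
    have hp1 : (1 : ℤ) ≤ ((ℓ ^ n : ℕ) : ℤ) := by
      exact_mod_cast Nat.one_le_iff_ne_zero.mpr (pow_ne_zero n hℓ.pos.ne')
    have hlomono : lo ℓ (n + 1) ≤ lo ℓ n := by
      have := hf_mono hℓ n; simp only [lo]; omega
    have hJn := hiJ_eq hℓ n
    have hee : (ee ℓ (n + 1) : ℤ) = ((ℓ ^ n : ℕ) : ℤ) := rfl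
    have hJn1 : hiJ ℓ (n + 1) = hiB ℓ (n + 1) + ((ℓ ^ n : ℕ) : ℤ) := by
      simp only [hiJ, hee]
    have hloneg : lo ℓ n ≤ 0 := by simp only [lo]; omega
    have hiBn1 := hiB_nonneg hℓ (n + 1)
    have hiJn_nonneg : 0 ≤ hiJ ℓ n := by
      have := hiB_nonneg hℓ n
      have : (0 : ℤ) ≤ (ee ℓ n : ℤ) := by positivity
      simp only [hiJ]; omega
    have down : ∀ k : ℕ, ∀ t : ℤ, lo ℓ n ≤ t → t ≤ hiJ ℓ (n + 1) →
        t ≤ hiJ ℓ n + k → (T t : LaurentPolynomial A) ∈ ⨆ k, cyclotomicD A ℓ k := by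
      intro k
      induction k with
      | zero => intro t h1 h2 h3; exact IH t h1 (by omega)
      | succ k ih =>
        intro t h1 h2 h3
        by_cases hc : t ≤ hiJ ℓ n + k
        · exact ih t h1 h2 hc
        · push_neg at hc
          have ht : hiJ ℓ n < t := by omega
          set p : ℤ := ((ℓ ^ n : ℕ) : ℤ) with hpdef
          have h1' : lo ℓ n ≤ t - p := by omega
          have hb1 : lo ℓ (n + 1) ≤ t - p := le_trans hlomono h1'
          have hb2 : t - p ≤ hiB ℓ (n + 1) := by omega
          have hdiff := diff_mem (A := A) n hb1 hb2
          rw [show t - p + p = t by ring] at hdiff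
          have hrec := ih (t - p) h1' (by omega) (by omega)
          have := add_mem hrec (le_iSup (cyclotomicD A ℓ) (n + 1) hdiff)
          simpa using this
    have up : ∀ k : ℕ, ∀ t : ℤ, lo ℓ (n + 1) ≤ t → t ≤ hiJ ℓ n →
        lo ℓ n - k ≤ t → (T t : LaurentPolynomial A) ∈ ⨆ k, cyclotomicD A ℓ k := by
      intro k
      induction k with
      | zero => intro t h1 h2 h3; exact IH t (by omega) h2
      | succ k ih =>
        intro t h1 h2 h3
        by_cases hc : lo ℓ n - k ≤ t
        · exact ih t h1 h2 hc
        · push_neg at hc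
          have ht : t < lo ℓ n := by omega
          set p : ℤ := ((ℓ ^ n : ℕ) : ℤ) with hpdef
          have hb2 : t ≤ hiB ℓ (n + 1) := by omega
          have hdiff := diff_mem (A := A) n h1 hb2
          have hrec := ih (t + p) (by omega) (by omega) (by omega)
          have hdiff' := le_iSup (cyclotomicD A ℓ) (n + 1) hdiff
          rw [← hpdef] at hdiff'
          have := sub_mem hrec hdiff'
          rwa [sub_sub_cancel] at this
    intro t h1 h2
    by_cases hc : lo ℓ n ≤ t
    · have hk := Int.self_le_toNat (t - hiJ ℓ n)
      exact down (t - hiJ ℓ n).toNat t hc h2 (by omega)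
    · push_neg at hc
      have hk := Int.self_le_toNat (lo ℓ n - t)
      exact up (lo ℓ n - t).toNat t h1 (by omega) (by omega)

lemma T_mem_iSup (hℓ : Nat.Prime ℓ) (t : ℤ) :
    (T t : LaurentPolynomial A) ∈ ⨆ k, cyclotomicD A ℓ k := by
  set K := t.natAbs with hK
  have hpow : 2 * (K + 1) ≤ ℓ ^ (K + 1) := by
    have h1 : K + 1 ≤ 2 ^ K := (Nat.lt_two_pow_self (n := K))
    have h2 : 2 ^ (K + 1) ≤ ℓ ^ (K + 1) := Nat.pow_le_pow_left hℓ.two_le _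
    have : 2 ^ (K + 1) = 2 * 2 ^ K := by rw [pow_succ, mul_comm]
    omega
  have hmm : 2 * (K + 1) ≤ mm ℓ (K + 2) := by
    have h1 := mm_add_ee hℓ (K + 2)
    have h2 : ee ℓ (K + 2) = ℓ ^ (K + 1) := rfl
    have h3 : ℓ ^ (K + 1) + ℓ ^ (K + 1) ≤ ℓ ^ (K + 2) := by
      have h : ℓ ^ (K + 1) * 2 ≤ ℓ ^ (K + 1) * ℓ := Nat.mul_le_mul le_rfl hℓ.two_le
      rw [pow_succ ℓ (K + 1)]; omega
    omega
  have hhf : K + 1 ≤ hf ℓ (K + 2) := Nat.le_div_iff_mul_le two_pos |>.mpr (by omega)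
  have hc1 : ((K : ℤ) + 1) ≤ (hf ℓ (K + 2) : ℤ) := by exact_mod_cast hhf
  have hc2 : ((K : ℤ) + 1) * 2 ≤ ((ℓ ^ (K + 1) : ℕ) : ℤ) := by
    exact_mod_cast (by omega : (K + 1) * 2 ≤ ℓ ^ (K + 1))
  have ht1 : t ≤ (K : ℤ) := by omega
  have ht2 : -(K : ℤ) ≤ t := by omega
  have h1 : lo ℓ (K + 2) ≤ t := by
    have : lo ℓ (K + 2) = -((hf ℓ (K + 2) : ℕ) : ℤ) := rfl
    rw [this]; linarith
  have h2 : t ≤ hiJ ℓ (K + 2) := by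
    have hB := hiB_nonneg hℓ (K + 2)
    have hee : hiJ ℓ (K + 2) = hiB ℓ (K + 2) + ((ℓ ^ (K + 1) : ℕ) : ℤ) := rfl
    rw [hee]; linarith
  exact J_mem hℓ (K + 2) t h1 h2

lemma mem_iSup_all (hℓ : Nat.Prime ℓ) (P : LaurentPolynomial A) :
    P ∈ ⨆ k, cyclotomicD A ℓ k := by
  induction P using LaurentPolynomial.induction_on' with
  | add p q hp hq => exact add_mem hp hq
  | C_mul_T n a =>
    have h := T_mem_iSup (A := A) hℓ n
    have he : (C a : LaurentPolynomial A) * T n = a • T n := by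
      rw [← single_eq_C_mul_T, T, AddMonoidAlgebra.smul_single, smul_eq_mul, mul_one]
    rw [he]
    exact Submodule.smul_mem _ a h

lemma exists_decomp (hℓ : Nat.Prime ℓ) (P : LaurentPolynomial A) :
    ∃ (N : ℕ) (Pf : ℕ → LaurentPolynomial A),
      (∀ i ≤ N, Pf i ∈ cyclotomicD A ℓ i) ∧
      ∑ i ∈ Finset.range (N + 1), Pf i = P := by
  obtain ⟨f, hf, hsum⟩ :=
    (Submodule.mem_iSup_iff_exists_finsupp (cyclotomicD A ℓ) P).mp (mem_iSup_all hℓ P)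
  refine ⟨f.support.sup id, f, fun i _ => hf i, ?_⟩
  rw [← hsum, Finsupp.sum]
  refine (Finset.sum_subset (fun i hi => Finset.mem_range.mpr ?_)
    (fun i _ hi => Finsupp.notMem_support_iff.mp hi)).symm
  exact Nat.lt_succ_of_le (Finset.le_sup (f := id) hi)

end CycAux

/-- The `ℓⁿ`-th cyclotomic polynomial `Φ_{ℓⁿ}`, viewed as an element of `A[z^{±1}]`. -/
noncomputable def cyclotomicLaurent (A : Type*) [CommRing A] (ℓ n : ℕ) :
    LaurentPolynomial A :=
  Polynomial.toLaurent (Polynomial.cyclotomic (ℓ ^ n) A)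

/-- The `A`-algebra homomorphism `c : A[z^{±1}] → ∏_{n ≥ 0} A[z^{±1}]/(Φ_{ℓⁿ})` whose `n`-th
component is reduction modulo the ideal generated by `Φ_{ℓⁿ}`. -/
noncomputable def cyclotomicRestriction (A : Type*) [CommRing A] (ℓ : ℕ) :
    LaurentPolynomial A →+* ∀ n : ℕ, LaurentPolynomial A ⧸ Ideal.span {cyclotomicLaurent A ℓ n} :=
  Pi.ringHom fun n => Ideal.Quotient.mk (Ideal.span {cyclotomicLaurent A ℓ n})

/-- Description of the image of `c` (Lemma 2.2.5(1)): a family `(q_n)_{n ≥ 0}` lies in the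
image of `c : A[z^{±1}] → ∏_{n ≥ 0} A[z^{±1}]/(Φ_{ℓⁿ})` if and only if there are `N ≥ 0` and
elements `P_i ∈ D_i` for `0 ≤ i ≤ N` with `q_n = P_0 + ⋯ + P_N mod Φ_{ℓⁿ}` for all `n ≥ 0`;
and in that case `(q_n) = c(P_0 + ⋯ + P_N)`. -/
theorem cyclotomicRestriction_range {A : Type*} [CommRing A] {ℓ : ℕ}
    (hℓ : Nat.Prime ℓ) (hunit : IsUnit (ℓ : A))
    (q : ∀ n : ℕ, LaurentPolynomial A ⧸ Ideal.span {cyclotomicLaurent A ℓ n}) :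
    (q ∈ Set.range (cyclotomicRestriction A ℓ) ↔
      ∃ (N : ℕ) (P : ℕ → LaurentPolynomial A),
        (∀ i ≤ N, P i ∈ cyclotomicD A ℓ i) ∧
        ∀ n : ℕ, q n = Ideal.Quotient.mk (Ideal.span {cyclotomicLaurent A ℓ n})
            (∑ i ∈ Finset.range (N + 1), P i)) ∧
    (∀ (N : ℕ) (P : ℕ → LaurentPolynomial A),
      (∀ i ≤ N, P i ∈ cyclotomicD A ℓ i) →
      (∀ n : ℕ, q n = Ideal.Quotient.mk (Ideal.span {cyclotomicLaurent A ℓ n})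
          (∑ i ∈ Finset.range (N + 1), P i)) →
      q = cyclotomicRestriction A ℓ (∑ i ∈ Finset.range (N + 1), P i)) := by
  constructor
  · constructor
    · rintro ⟨P, rfl⟩
      obtain ⟨N, Pf, hmem, hsum⟩ := CycAux.exists_decomp hℓ P
      exact ⟨N, Pf, hmem, fun n => by rw [hsum]; rfl⟩
    · rintro ⟨N, Pf, hmem, hq⟩
      exact ⟨∑ i ∈ Finset.range (N + 1), Pf i, funext fun n => (hq n).symm⟩
  · intro N P hmem hq
    exact funext fun n => hq n
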